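/- (Additional conditions for zero in-plane error.) Let G : E → E map into X and let G⊥ : E → E map into Xᗮ, and suppose the map Ḡ : E → E satisfies the decomposition Ḡ(y) = G(P y) + G⊥(y) for all y ∈ E. Suppose further that Ḡ satisfies the projected Lipschitz condition: there exists a real constant L with L < 1 such that ‖P(Ḡ(w₁)) − P(Ḡ(w₂))‖ ≤ L · ‖P w₁ − P w₂‖ for all w₁, w₂ ∈ E. If y⋆ ∈ E satisfies y⋆ = G(y⋆) and ȳ⋆ ∈ E satisfies ȳ⋆ = Ḡ(ȳ⋆), then y⋆ = P ȳ⋆; in other words, the in-plane error is zero. -/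

import Mathlib

/-- Additional conditions for zero in-plane error: under the decomposition
`Gbar y = G (P y) + Gperp y` and the projected Lipschitz condition with
constant `L < 1`, a fixed point `ystar` of `G` equals the projection of any
fixed point `ybar` of `Gbar`. -/
theorem zero_in_plane_error_additional
    {E : Type*} [NormedAddCommGroup E] [InnerProductSpace ℝ E]
    (X : Submodule ℝ E) [CompleteSpace X]
    (G Gperp Gbar : E → E)
    (hG : ∀ y : E, G y ∈ X)
    (hGperp : ∀ y : E, Gperp y ∈ Xᗮ)
    (hdecomp : ∀ y : E, Gbar y = G ((Submodule.orthogonalProjectionOnto X y : E)) + Gperp y)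
    (L : ℝ) (hL : L < 1)
    (hLip : ∀ w₁ w₂ : E,
      ‖(Submodule.orthogonalProjectionOnto X (Gbar w₁) : E) -
        (Submodule.orthogonalProjectionOnto X (Gbar w₂) : E)‖ ≤
      L * ‖(Submodule.orthogonalProjectionOnto X w₁ : E) -
        (Submodule.orthogonalProjectionOnto X w₂ : E)‖)
    (ystar : E) (hfix : ystar = G ystar)
    (ybar : E) (hfixbar : ybar = Gbar ybar) :
    ystar = (Submodule.orthogonalProjectionOnto X ybar : E) := by
  have hPG : ∀ y : E, (Submodule.orthogonalProjectionOnto X (Gbar y) : E)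
      = G ((Submodule.orthogonalProjectionOnto X y : E)) := by
    intro y
    rw [hdecomp y, map_add]
    rw [Submodule.orthogonalProjectionOnto_mem_subspace_eq_self ⟨_, hG _⟩,
      Submodule.orthogonalProjectionOnto_apply_of_mem_orthogonal (hGperp y)]
    simp
  have hyX : ystar ∈ X := hfix ▸ hG ystar
  have hPystar : (Submodule.orthogonalProjectionOnto X ystar : E) = ystar := by
    exact Submodule.starProjection_eq_self_iff.mpr hyX
  have h1 : (Submodule.orthogonalProjectionOnto X (Gbar ystar) : E) = ystar := by
    rw [hPG, hPystar, ← hfix]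
  have h2 : (Submodule.orthogonalProjectionOnto X (Gbar ybar) : E)
      = (Submodule.orthogonalProjectionOnto X ybar : E) := by
    conv_rhs => rw [hfixbar]
  have key := hLip ystar ybar
  rw [h1, h2, hPystar] at key
  have hnorm : ‖ystar - (Submodule.orthogonalProjectionOnto X ybar : E)‖ = 0 := by
    nlinarith [norm_nonneg (ystar - (Submodule.orthogonalProjectionOnto X ybar : E))]
  have := norm_eq_zero.mp hnorm
  exact sub_eq_zero.mp this
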